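/- Let c_0' := ∫_0^∞ (1/2 - 1/ζ + 1/(e^ζ - 1)) · 1/(e^{ζ/2} - 1) dζ and for j ≥ 1 let p_j := ∫_0^∞ (1/2 - 1/ζ + 1/(e^ζ - 1)) e^{-jζ/2} dζ. Then Σ_{j=1}^∞ p_j converges with value c_0', and there is a constant C > 0 such that |Σ_{j=n+1}^∞ p_j| ≤ C/n for all n ≥ 1. -/

import Mathlib

open MeasureTheory Real

/-- The Binet-type integrals `p_j := ∫₀^∞ (1/2 - 1/ζ + 1/(e^ζ-1)) e^{-jζ/2} dζ`. -/
noncomputable def binetP (j : ℕ) : ℝ :=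
  ∫ ζ in Set.Ioi (0:ℝ), (1/2 - 1/ζ + 1/(Real.exp ζ - 1)) * Real.exp (-(j:ℝ) * ζ / 2)

/-- `c₀' := ∫₀^∞ (1/2 - 1/ζ + 1/(e^ζ-1)) · 1/(e^{ζ/2}-1) dζ`. -/
noncomputable def binetC : ℝ :=
  ∫ ζ in Set.Ioi (0:ℝ), (1/2 - 1/ζ + 1/(Real.exp ζ - 1)) * (1/(Real.exp (ζ/2) - 1))

private lemma exp_upper_aux {x : ℝ} (h0 : 0 ≤ x) (h1 : x ≤ 1) :
    Real.exp x ≤ 1 + x + x^2/2 + (2/9) * x^3 := by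
  have h := Real.exp_bound' h0 h1 (n := 3) (by norm_num)
  simp [Finset.sum_range_succ, Nat.factorial] at h
  nlinarith [h]

/-- The key pointwise bound: `|1/2 - 1/ζ + 1/(e^ζ-1)| ≤ ζ` for `ζ > 0`. -/
private lemma binet_abs_le {ζ : ℝ} (hζ : 0 < ζ) :
    |1/2 - 1/ζ + 1/(Real.exp ζ - 1)| ≤ ζ := by
  have hq : 1 + ζ + ζ^2/2 ≤ Real.exp ζ := Real.quadratic_le_exp_of_nonneg hζ.le
  have hE0 : 0 < Real.exp ζ - 1 := by nlinarith
  rw [abs_le]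
  constructor
  · -- lower bound : -ζ ≤ f ζ
    rcases le_or_gt ζ 1 with h1 | h1
    · have hu : Real.exp ζ - 1 ≤ ζ + ζ^2/2 + (2/9)*ζ^3 := by
        have := exp_upper_aux hζ.le h1; linarith
      have hU : (0:ℝ) < ζ + ζ^2/2 + (2/9)*ζ^3 := by positivity
      have h2 : 1/(ζ + ζ^2/2 + (2/9)*ζ^3) ≤ 1/(Real.exp ζ - 1) :=
        one_div_le_one_div_of_le hE0 hu
      have key : (1/2 - 1/ζ + 1/(ζ + ζ^2/2 + (2/9)*ζ^3)) - (-ζ)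
          = ((37/36)*ζ^3 + (11/18)*ζ^4 + (2/9)*ζ^5) / (ζ * (ζ + ζ^2/2 + (2/9)*ζ^3)) := by
        field_simp
        ring
      have h3 : -ζ ≤ 1/2 - 1/ζ + 1/(ζ + ζ^2/2 + (2/9)*ζ^3) := by
        rw [← sub_nonneg, key]; positivity
      linarith
    · have h4 : 1/ζ ≤ 1 := by rw [div_le_one hζ]; linarith
      have h5 : (0:ℝ) < 1/(Real.exp ζ - 1) := by positivity
      linarith
  · -- upper bound : f ζ ≤ ζ
    have hD : (0:ℝ) < ζ + ζ^2/2 := by positivity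
    have h2 : 1/(Real.exp ζ - 1) ≤ 1/(ζ + ζ^2/2) :=
      one_div_le_one_div_of_le hD (by linarith)
    have key : ζ - (1/2 - 1/ζ + 1/(ζ + ζ^2/2))
        = ((3/4)*ζ^3 + ζ^4/2) / (ζ * (ζ + ζ^2/2)) := by
      field_simp
      ring
    have h3 : 1/2 - 1/ζ + 1/(ζ + ζ^2/2) ≤ ζ := by
      rw [← sub_nonneg, key]; positivity
    linarith

private lemma integrableOn_id_mul_exp {c : ℝ} (hc : 0 < c) :
    IntegrableOn (fun ζ : ℝ => ζ * Real.exp (-(c * ζ))) (Set.Ioi 0) := by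
  have h := integrableOn_rpow_mul_exp_neg_mul_rpow (p := 1) (s := 1) (b := c)
    (by norm_num) (by norm_num) hc
  refine h.congr_fun (fun x _ => ?_) measurableSet_Ioi
  simp [Real.rpow_one]

private lemma integral_id_mul_exp {c : ℝ} (hc : 0 < c) :
    ∫ ζ in Set.Ioi (0:ℝ), ζ * Real.exp (-(c * ζ)) = 1/c^2 := by
  have h := integral_rpow_mul_exp_neg_mul_Ioi (a := 2) (r := c) (by norm_num) hc
  rw [show ((2:ℝ)-1) = 1 by norm_num] at h
  simp_rw [Real.rpow_one] at h
  rw [h, Real.Gamma_two, mul_one, show ((2:ℝ)) = ((2:ℕ):ℝ) by norm_num,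
    Real.rpow_natCast, div_pow, one_pow]

private lemma integrand_aesm {c : ℝ} :
    AEStronglyMeasurable
      (fun ζ : ℝ => (1/2 - 1/ζ + 1/(Real.exp ζ - 1)) * Real.exp (-(c * ζ)))
      (volume.restrict (Set.Ioi 0)) := by
  apply Measurable.aestronglyMeasurable
  fun_prop

private lemma integrableOn_binet {c : ℝ} (hc : 0 < c) :
    IntegrableOn
      (fun ζ : ℝ => (1/2 - 1/ζ + 1/(Real.exp ζ - 1)) * Real.exp (-(c * ζ)))
      (Set.Ioi 0) := by
  refine Integrable.mono (integrableOn_id_mul_exp hc) integrand_aesm ?_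
  refine Filter.eventually_of_mem (self_mem_ae_restrict measurableSet_Ioi) (fun ζ hζ => ?_)
  have hζ0 : (0:ℝ) < ζ := hζ
  have he : (0:ℝ) < Real.exp (-(c * ζ)) := Real.exp_pos _
  rw [norm_mul, Real.norm_eq_abs, Real.norm_eq_abs, Real.norm_eq_abs, abs_mul,
    abs_of_pos he, abs_of_pos hζ0]
  exact mul_le_mul_of_nonneg_right (binet_abs_le hζ0) he.le

private lemma integral_norm_binet_le {c : ℝ} (hc : 0 < c) :
    ∫ ζ in Set.Ioi (0:ℝ),
      ‖(1/2 - 1/ζ + 1/(Real.exp ζ - 1)) * Real.exp (-(c * ζ))‖ ≤ 1/c^2 := by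
  rw [← integral_id_mul_exp hc]
  refine integral_mono_of_nonneg ?_ (integrableOn_id_mul_exp hc) ?_
  · exact Filter.Eventually.of_forall (fun ζ => norm_nonneg _)
  · refine Filter.eventually_of_mem (self_mem_ae_restrict measurableSet_Ioi) (fun ζ hζ => ?_)
    have hζ0 : (0:ℝ) < ζ := hζ
    have he : (0:ℝ) < Real.exp (-(c * ζ)) := Real.exp_pos _
    beta_reduce
    rw [norm_mul, Real.norm_eq_abs, Real.norm_eq_abs, abs_of_pos he]
    exact mul_le_mul_of_nonneg_right (binet_abs_le hζ0) he.le

private lemma binetP_eq {m : ℕ} :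
    binetP m = ∫ ζ in Set.Ioi (0:ℝ),
      (1/2 - 1/ζ + 1/(Real.exp ζ - 1)) * Real.exp (-(((m:ℝ)/2) * ζ)) := by
  unfold binetP
  congr 1
  funext ζ
  congr 2
  ring

private lemma abs_binetP_le {m : ℕ} (hm : 1 ≤ m) : |binetP m| ≤ 4 / (m:ℝ)^2 := by
  have hm0 : (0:ℝ) < (m:ℝ) := by exact_mod_cast hm
  have hc : (0:ℝ) < (m:ℝ)/2 := by positivity
  rw [binetP_eq, ← Real.norm_eq_abs]
  calc ‖∫ ζ in Set.Ioi (0:ℝ),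
        (1/2 - 1/ζ + 1/(Real.exp ζ - 1)) * Real.exp (-(((m:ℝ)/2) * ζ))‖
      ≤ ∫ ζ in Set.Ioi (0:ℝ),
        ‖(1/2 - 1/ζ + 1/(Real.exp ζ - 1)) * Real.exp (-(((m:ℝ)/2) * ζ))‖ :=
        norm_integral_le_integral_norm _
    _ ≤ 1/((m:ℝ)/2)^2 := integral_norm_binet_le hc
    _ = 4 / (m:ℝ)^2 := by field_simp; ring

private lemma summable_four_div_sq :
    Summable (fun j : ℕ => 4 / ((j:ℝ)+1)^2) := by
  have h : Summable (fun j : ℕ => 4 * (1 / (j:ℝ)^2)) :=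
    (Real.summable_one_div_nat_pow.mpr (by norm_num)).mul_left 4
  have h2 := (summable_nat_add_iff 1).mpr h
  refine h2.congr (fun j => ?_)
  push_cast
  rw [mul_one_div]

/-- The series `Σ_{j≥1} p_j` converges with value `c₀'`, and the tails satisfy
`|Σ_{j=n+1}^∞ p_j| ≤ C/n` for a constant `C > 0`. -/
theorem binet_sum_and_tail :
    HasSum (fun j : ℕ => binetP (j + 1)) binetC ∧
    ∃ C : ℝ, 0 < C ∧ ∀ n : ℕ, 1 ≤ n → |∑' j : ℕ, binetP (n + 1 + j)| ≤ C / n := by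
  constructor
  · -- the HasSum statement
    set F : ℕ → ℝ → ℝ := fun j ζ =>
      (1/2 - 1/ζ + 1/(Real.exp ζ - 1)) * Real.exp (-((((j:ℝ)+1)/2) * ζ)) with hF
    have hc : ∀ j : ℕ, (0:ℝ) < ((j:ℝ)+1)/2 := fun j => by positivity
    have hF_int : ∀ j : ℕ, Integrable (F j) (volume.restrict (Set.Ioi 0)) :=
      fun j => integrableOn_binet (hc j)
    have hF_sum : Summable fun j => ∫ ζ in Set.Ioi (0:ℝ), ‖F j ζ‖ := by
      refine Summable.of_nonneg_of_le
        (fun j => integral_nonneg (fun ζ => norm_nonneg _))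
        (fun j => ?_) summable_four_div_sq
      calc (∫ ζ in Set.Ioi (0:ℝ), ‖F j ζ‖) ≤ 1/(((j:ℝ)+1)/2)^2 :=
            integral_norm_binet_le (hc j)
        _ = 4 / ((j:ℝ)+1)^2 := by
            rw [div_pow]
            rw [one_div_div]
            norm_num
    have hmain := MeasureTheory.hasSum_integral_of_summable_integral_norm hF_int hF_sum
    have h1 : (fun j : ℕ => binetP (j+1)) = fun j : ℕ => ∫ ζ in Set.Ioi (0:ℝ), F j ζ := by
      funext j
      rw [binetP_eq]
      congr 1
      funext ζ
      congr 2
      push_cast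
      ring
    have h2 : (∫ ζ in Set.Ioi (0:ℝ), ∑' j : ℕ, F j ζ) = binetC := by
      unfold binetC
      refine setIntegral_congr_fun measurableSet_Ioi (fun ζ hζ => ?_)
      have hζ0 : (0:ℝ) < ζ := hζ
      simp only [hF]
      rw [tsum_mul_left]
      congr 1
      set r := Real.exp (-(ζ/2)) with hr
      have hr0 : 0 < r := Real.exp_pos _
      have hr1 : r < 1 := by rw [hr, Real.exp_lt_one_iff]; linarith
      have hE : 1 < Real.exp (ζ/2) := Real.one_lt_exp_iff.mpr (by linarith)
      have hstep : ∀ j : ℕ, Real.exp (-((((j:ℝ)+1)/2) * ζ)) = r^(j+1) := by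
        intro j
        rw [hr, ← Real.exp_nat_mul]
        congr 1
        push_cast
        ring
      rw [tsum_congr hstep]
      have : ∑' j : ℕ, r^(j+1) = r * (1-r)⁻¹ := by
        simp_rw [pow_succ']
        rw [tsum_mul_left, tsum_geometric_of_lt_one hr0.le hr1]
      rw [this, ← div_eq_mul_inv]
      have hre : r * Real.exp (ζ/2) = 1 := by
        rw [hr, ← Real.exp_add]; norm_num
      rw [div_eq_div_iff (by linarith) (by linarith)]
      nlinarith [hre]
    rw [h1, ← h2]
    exact hmain
  · -- the tail bound
    refine ⟨4, by norm_num, fun n hn => ?_⟩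
    have hn0 : (0:ℝ) < (n:ℝ) := by exact_mod_cast hn
    have hB : Summable (fun j : ℕ => 4 / (((n+1+j:ℕ)):ℝ)^2) := by
      have h := (summable_nat_add_iff (f := fun m : ℕ => 4 / ((m:ℝ))^2) (n+1)).mpr
        (by
          have h' : Summable (fun m : ℕ => 4 * (1 / (m:ℝ)^2)) :=
            (Real.summable_one_div_nat_pow.mpr (by norm_num)).mul_left 4
          exact h'.congr (fun m => by rw [mul_one_div]))
      refine h.congr (fun j => ?_)
      congr 2
      push_cast
      ring
    have habs : ∀ j : ℕ, |binetP (n+1+j)| ≤ 4 / (((n+1+j:ℕ)):ℝ)^2 :=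
      fun j => abs_binetP_le (by omega)
    have hsum_abs : Summable (fun j : ℕ => |binetP (n+1+j)|) :=
      Summable.of_nonneg_of_le (fun j => abs_nonneg _) habs hB
    have hstep1 : |∑' j : ℕ, binetP (n+1+j)| ≤ ∑' j : ℕ, |binetP (n+1+j)| := by
      simpa [Real.norm_eq_abs] using
        norm_tsum_le_tsum_norm (f := fun j : ℕ => binetP (n+1+j))
          (by simpa [Real.norm_eq_abs] using hsum_abs)
    have hstep2 : (∑' j : ℕ, |binetP (n+1+j)|) ≤ ∑' j : ℕ, 4 / (((n+1+j:ℕ)):ℝ)^2 :=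
      Summable.tsum_le_tsum habs hsum_abs hB
    have hstep3 : (∑' j : ℕ, 4 / (((n+1+j:ℕ)):ℝ)^2) ≤ 4 / (n:ℝ) := by
      refine Real.tsum_le_of_sum_range_le (fun j => by positivity) (fun k => ?_)
      have hterm : ∀ i : ℕ, 4 / (((n+1+i:ℕ)):ℝ)^2 ≤
          4 / ((n+i:ℕ):ℝ) - 4 / ((n+(i+1):ℕ):ℝ) := by
        intro i
        have ha : (1:ℝ) ≤ ((n+i:ℕ):ℝ) := by
          have : 1 ≤ n + i := by omega
          exact_mod_cast this
        set a := ((n+i:ℕ):ℝ) with hadef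
        have ha0 : (0:ℝ) < a := by linarith
        have hcast1 : (((n+1+i:ℕ)):ℝ) = a + 1 := by rw [hadef]; push_cast; ring
        have hcast2 : ((n+(i+1):ℕ):ℝ) = a + 1 := by rw [hadef]; push_cast; ring
        rw [hcast1, hcast2]
        have heq : 4 / a - 4 / (a+1) = 4 / (a * (a+1)) := by
          field_simp
          ring
        rw [heq]
        apply div_le_div_of_nonneg_left (by norm_num) (by positivity)
        nlinarith
      calc ∑ i ∈ Finset.range k, 4 / (((n+1+i:ℕ)):ℝ)^2
          ≤ ∑ i ∈ Finset.range k, (4 / ((n+i:ℕ):ℝ) - 4 / ((n+(i+1):ℕ):ℝ)) :=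
            Finset.sum_le_sum (fun i _ => hterm i)
        _ = 4 / ((n+0:ℕ):ℝ) - 4 / ((n+k:ℕ):ℝ) :=
            Finset.sum_range_sub' (fun i => 4 / ((n+i:ℕ):ℝ)) k
        _ ≤ 4 / (n:ℝ) := by
            have : (0:ℝ) ≤ 4 / ((n+k:ℕ):ℝ) := by positivity
            simp only [Nat.add_zero]
            linarith
    linarith
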